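/- Let λ be a Perron number whose degree [ℚ(λ):ℚ] is even. Then ℚ(λ + λ⁻¹) = ℚ(λ² + λ⁻²) if and only if −λ⁻¹ is not a Galois conjugate of λ. -/

import Mathlib

open Polynomial

/-- The Galois conjugates of a real algebraic number: the complex roots of its
minimal polynomial over `ℚ`. -/
def galoisConjugates (x : ℝ) : Set ℂ :=
  {z : ℂ | Polynomial.aeval z (minpoly ℚ x) = 0}

/-- A Perron number: a real algebraic integer `l > 1` all of whose Galois conjugates
other than `l` itself have modulus strictly less than `l`. -/
def IsPerron (l : ℝ) : Prop :=
  1 < l ∧ IsIntegral ℤ l ∧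
    ∀ z : ℂ, z ∈ galoisConjugates l → z ≠ (l : ℂ) → ‖z‖ < l

open IntermediateField

lemma aux_conj_transfer (l : ℝ) (hint : IsIntegral ℚ l) (z : ℂ)
    (hz : Polynomial.aeval z (minpoly ℚ (l + l⁻¹)) = 0) :
    ∃ μ : ℂ, Polynomial.aeval μ (minpoly ℚ l) = 0 ∧ μ + μ⁻¹ = z := by
  set α := l + l⁻¹ with hαdef
  have hαF : α ∈ ℚ⟮l⟯ :=
    add_mem (mem_adjoin_simple_self ℚ l) (inv_mem (mem_adjoin_simple_self ℚ l))
  haveI : Algebra.IsAlgebraic ℚ (ℚ⟮l⟯) := isAlgebraic_adjoin_simple hint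
  set α' : ℚ⟮l⟯ := ⟨α, hαF⟩ with hα'def
  have hmin : minpoly ℚ α' = minpoly ℚ α := by
    have := minpoly.algebraMap_eq (algebraMap (ℚ⟮l⟯) ℝ).injective α' (A := ℚ)
    rw [← this]; rfl
  obtain ⟨φ, hφ⟩ := exists_algHom_of_splits_of_aeval
    (F := ℚ) (E := ℚ⟮l⟯) (K := ℂ)
    (fun s => ⟨(Algebra.IsAlgebraic.isAlgebraic s).isIntegral,
      IsAlgClosed.splits _⟩)
    (x := α') (y := z) (by rw [hmin]; exact hz)
  set g : ℚ⟮l⟯ := AdjoinSimple.gen ℚ l with hg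
  refine ⟨φ g, ?_, ?_⟩
  · have h1 : (Polynomial.aeval g) (minpoly ℚ l) = 0 := aeval_gen_minpoly ℚ l
    rw [Polynomial.aeval_algHom_apply φ g (minpoly ℚ l), h1, map_zero]
  · have key : g + g⁻¹ = α' := by
      apply Subtype.ext
      push_cast
      rfl
    rw [← map_inv₀, ← map_add, key, hφ]

theorem perron_traces_even_degree_iff (l : ℝ) (hl : IsPerron l)
    (heven : Even (minpoly ℚ l).natDegree) :
    IntermediateField.adjoin ℚ {l + l⁻¹} =
      IntermediateField.adjoin ℚ {l ^ 2 + (l ^ 2)⁻¹} ↔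
    (-((l : ℂ))⁻¹) ∉ galoisConjugates l := by
  obtain ⟨hl1, hlZ, hperron⟩ := hl
  have hl0' : (0:ℝ) < l := lt_trans one_pos hl1
  have hl0 : l ≠ 0 := ne_of_gt hl0'
  have hint : IsIntegral ℚ l := hlZ.tower_top
  have hinv : IsIntegral ℚ l⁻¹ := (hint.isAlgebraic.inv).isIntegral
  set α := l + l⁻¹ with hαdef
  set β := l ^ 2 + (l ^ 2)⁻¹ with hβdef
  have hαint : IsIntegral ℚ α := hint.add hinv
  have hβint : IsIntegral ℚ β := (hint.pow 2).add (((hint.pow 2).isAlgebraic.inv).isIntegral)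
  have hβeq : β = α ^ 2 - 2 := by
    rw [hαdef, hβdef]; field_simp; ring
  have hα0 : (0:ℝ) < α := add_pos hl0' (inv_pos.2 hl0')
  have hlC : ((l:ℂ)) ≠ 0 := by exact_mod_cast hl0
  constructor
  · intro hfield hconj
    have hconj' : Polynomial.aeval (-((l:ℂ))⁻¹) (minpoly ℚ l) = 0 := hconj
    haveI : Algebra.IsAlgebraic ℚ (ℚ⟮l⟯) := isAlgebraic_adjoin_simple hint
    have hlF : l ∈ ℚ⟮l⟯ := mem_adjoin_simple_self ℚ l
    have hαF : α ∈ ℚ⟮l⟯ := add_mem hlF (inv_mem hlF)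
    have h2F : (2:ℝ) ∈ ℚ⟮l⟯ := by
      have : ((2:ℚ):ℝ) ∈ ℚ⟮l⟯ := IntermediateField.algebraMap_mem _ (2:ℚ)
      simpa using this
    have hβF : β ∈ ℚ⟮l⟯ := by rw [hβeq]; exact sub_mem (pow_mem hαF 2) h2F
    set g : ℚ⟮l⟯ := AdjoinSimple.gen ℚ l with hg
    obtain ⟨φ, hφ⟩ := exists_algHom_of_splits_of_aeval (F := ℚ) (E := ℚ⟮l⟯) (K := ℂ)
      (fun s => ⟨(Algebra.IsAlgebraic.isAlgebraic s).isIntegral,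
        IsAlgClosed.splits _⟩)
      (x := g) (y := -((l:ℂ))⁻¹) (by rw [hg]; convert hconj' using 2; exact minpoly_gen ℚ l)
    set α' : ℚ⟮l⟯ := ⟨α, hαF⟩ with hα'def
    set β' : ℚ⟮l⟯ := ⟨β, hβF⟩ with hβ'def
    have hgα : g + g⁻¹ = α' := by
      apply Subtype.ext; push_cast; rfl
    have hφα : φ α' = -((α:ℝ):ℂ) := by
      rw [← hgα, map_add, map_inv₀, hφ]
      rw [inv_neg, inv_inv, hαdef]
      push_cast
      ring
    have hβ'α' : β' = α' ^ 2 - 2 := by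
      apply Subtype.ext
      push_cast
      exact hβeq
    have hφβ : φ β' = ((β:ℝ):ℂ) := by
      rw [hβ'α', map_sub, map_pow, hφα]
      rw [hβeq]
      push_cast
      ring_nf
      simp [map_ofNat]
      try ring
    have hmem : α ∈ IntermediateField.adjoin ℚ {β} := hfield ▸ mem_adjoin_simple_self ℚ α
    have hmem2 : α ∈ Algebra.adjoin ℚ ({β} : Set ℝ) := by
      rw [← adjoin_simple_toSubalgebra_of_isAlgebraic hβint.isAlgebraic]
      exact hmem
    rw [Algebra.adjoin_singleton_eq_range_aeval] at hmem2
    obtain ⟨p, hp0⟩ := hmem2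
    have hp : Polynomial.aeval β p = α := hp0
    have hα'p : α' = Polynomial.aeval β' p := by
      apply Subtype.ext
      have h1 := Polynomial.aeval_algebraMap_apply ℝ β' p
      have h2 : algebraMap (ℚ⟮l⟯) ℝ β' = β := rfl
      rw [h2] at h1
      have h3 : (↑(Polynomial.aeval β' p) : ℝ) = algebraMap (ℚ⟮l⟯) ℝ (Polynomial.aeval β' p) := rfl
      rw [h3, ← h1, hp]
    have hcontr : φ α' = ((α:ℝ):ℂ) := by
      rw [hα'p, ← Polynomial.aeval_algHom_apply, hφβ]
      have h1 := Polynomial.aeval_algebraMap_apply ℂ (β:ℝ) p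
      have h2 : algebraMap ℝ ℂ β = ((β:ℝ):ℂ) := rfl
      rw [h2] at h1
      rw [h1, hp]
      rfl
    rw [hφα] at hcontr
    have : (α:ℂ) = 0 := by linear_combination -hcontr / 2
    rw [Complex.ofReal_eq_zero] at this
    exact absurd this (ne_of_gt hα0)
  · intro hnot
    apply le_antisymm
    · rw [adjoin_le_iff]
      rintro x hx
      rw [Set.mem_singleton_iff] at hx
      subst hx
      show α ∈ IntermediateField.adjoin ℚ {β}
      by_contra hαK
      set K := IntermediateField.adjoin ℚ {β} with hK
      have hβK : β ∈ K := mem_adjoin_simple_self ℚ β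
      set b : K := ⟨β, hβK⟩ with hb
      set q : Polynomial K := Polynomial.X ^ 2 - Polynomial.C (b + 2) with hq
      have hqmonic : q.Monic := Polynomial.monic_X_pow_sub_C _ two_ne_zero
      have hqdeg : q.natDegree = 2 := Polynomial.natDegree_X_pow_sub_C
      have hab : algebraMap K ℝ (b + 2) = β + 2 := by
        rw [map_add]
        norm_num
        rfl
      have haq : Polynomial.aeval α q = 0 := by
        rw [hq]
        simp only [map_sub, map_pow, Polynomial.aeval_X, Polynomial.aeval_C, hab]
        rw [hβeq]
        ring
      have hKαint : IsIntegral K α := ⟨q, hqmonic, haq⟩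
      have hdvd : minpoly K α ∣ q := minpoly.dvd K α haq
      have hnotrange : α ∉ (algebraMap K ℝ).range := by
        rintro ⟨y, hy⟩
        exact hαK (hy ▸ y.2)
      have hge2 : 2 ≤ (minpoly K α).natDegree :=
        (minpoly.two_le_natDegree_iff hKαint).mpr hnotrange
      have hqeq : q = minpoly K α :=
        Polynomial.eq_of_monic_of_dvd_of_natDegree_le (minpoly.monic hKαint) hqmonic hdvd
          (by rw [hqdeg]; exact hge2)
      have hq' : Polynomial.aeval (-α) q = 0 := by
        rw [hq]
        simp only [map_sub, map_pow, Polynomial.aeval_X, Polynomial.aeval_C, hab]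
        rw [hβeq]
        ring
      have hmK : Polynomial.aeval (-α) (minpoly K α) = 0 := hqeq ▸ hq'
      obtain ⟨r, hr⟩ := minpoly.dvd_map_of_isScalarTower ℚ K α
      have hroot : Polynomial.aeval (-α) (minpoly ℚ α) = 0 := by
        have h1 := congrArg (Polynomial.aeval (-α : ℝ)) hr
        rw [Polynomial.aeval_map_algebraMap] at h1
        rw [h1, map_mul, hmK, zero_mul]
      have hrootC : Polynomial.aeval ((-α : ℝ) : ℂ) (minpoly ℚ α) = 0 := by
        have h1 := Polynomial.aeval_algebraMap_apply ℂ (-α : ℝ) (minpoly ℚ α)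
        have h2 : algebraMap ℝ ℂ (-α) = ((-α : ℝ) : ℂ) := rfl
        rw [h2, hroot, map_zero] at h1
        exact h1
      obtain ⟨μ, hμroot, hμsum⟩ := aux_conj_transfer l hint _ hrootC
      have hμ0 : μ ≠ 0 := by
        intro h
        rw [h, ← Polynomial.coeff_zero_eq_aeval_zero'] at hμroot
        have := minpoly.coeff_zero_ne_zero hint hl0
        simp only [_root_.map_eq_zero] at hμroot
        exact this hμroot
      have hsum : μ + μ⁻¹ = -((l:ℂ) + ((l:ℂ))⁻¹) := by
        rw [hμsum, hαdef]
        push_cast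
        ring
      have hfact : (μ + (l:ℂ)) * (μ + ((l:ℂ))⁻¹) = 0 := by
        have h := hsum
        field_simp at h ⊢
        linear_combination h
      rcases mul_eq_zero.mp hfact with h | h
      · have hμval : μ = -(l:ℂ) := by linear_combination h
        have hne : μ ≠ ((l:ℂ)) := by
          rw [hμval]
          intro hc
          apply hlC
          linear_combination -hc / 2
        have hlt := hperron μ hμroot hne
        rw [hμval] at hlt
        rw [norm_neg, Complex.norm_real, Real.norm_eq_abs, abs_of_pos hl0'] at hlt
        exact lt_irrefl l hlt
      · have hμval : μ = -((l:ℂ))⁻¹ := by linear_combination h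
        exact hnot (hμval ▸ hμroot)
    · rw [adjoin_le_iff]
      rintro x hx
      rw [Set.mem_singleton_iff] at hx
      subst hx
      show β ∈ IntermediateField.adjoin ℚ {α}
      have h2F : (2:ℝ) ∈ IntermediateField.adjoin ℚ {α} := by
        have : ((2:ℚ):ℝ) ∈ IntermediateField.adjoin ℚ {α} :=
          IntermediateField.algebraMap_mem _ (2:ℚ)
        simpa using this
      rw [hβeq]
      exact sub_mem (pow_mem (mem_adjoin_simple_self ℚ α) 2) h2F
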